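/- Let B be a brace and a, b ∈ B. If a commutes (in the multiplicative group B°) with every element of the additive cyclic subgroup ⟨b⟩₊, and b commutes with every element of ⟨a⟩₊, then every element of ⟨a⟩₊ commutes with every element of ⟨b⟩₊. In fact ma ∘ nb = (m - mn)a + (n - mn)b + mn(b∘a) for all integers m, n. -/

import Mathlib

private lemma brace_key (B : Type*) [AddCommGroup B] [Group B]
    (hbrace : ∀ a b c : B, a * (b + c) = a * b - a + a * c)
    (x y : B) (n : ℤ) : x * (n • y) = x + n • (x * y - x) := by
  have hx0 : x * 0 = x := by
    have := hbrace x 0 0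
    rw [add_zero] at this
    linear_combination (norm := abel_nf) -this
  let f : B →+ B :=
    { toFun := fun z => x * z - x
      map_zero' := by show x * 0 - x = 0; rw [hx0]; abel
      map_add' := fun u v => by show x * (u + v) - x = (x * u - x) + (x * v - x); rw [hbrace]; abel }
  have := f.map_zsmul n y
  simp only [f, AddMonoidHom.coe_mk, ZeroHom.coe_mk] at this
  linear_combination (norm := abel_nf) this

private lemma brace_formula (B : Type*) [AddCommGroup B] [Group B]
    (hbrace : ∀ a b c : B, a * (b + c) = a * b - a + a * c)
    (a b : B)
    (hb : ∀ m : ℤ, b * (m • a) = (m • a) * b) :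
    ∀ m n : ℤ, (m • a) * (n • b) =
        (m - m * n) • a + (n - m * n) • b + (m * n) • (b * a) := by
  intro m n
  have h1 : (m • a) * (n • b) = m • a + n • ((m • a) * b - m • a) := by
    simpa using brace_key B hbrace (m • a) b n
  have h2 : (m • a) * b = b + m • (b * a - b) := by
    rw [← hb m]
    simpa using brace_key B hbrace b a m
  rw [h1, h2]
  simp only [smul_sub, smul_add, sub_smul, mul_smul, mul_comm m n]
  abel

/-- in a brace, if `a` commutes multiplicatively with every element of `⟨b⟩₊`
and `b` commutes with every element of `⟨a⟩₊`, then
`ma ∘ nb = (m - mn)a + (n - mn)b + mn(b∘a)` and `⟨a⟩₊` centralizes `⟨b⟩₊`. -/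
theorem commutativity_of_cyclic_subbraces
    (B : Type*) [AddCommGroup B] [Group B]
    (hbrace : ∀ a b c : B, a * (b + c) = a * b - a + a * c)
    (a b : B)
    (ha : ∀ n : ℤ, a * (n • b) = (n • b) * a)
    (hb : ∀ m : ℤ, b * (m • a) = (m • a) * b) :
    (∀ m n : ℤ, (m • a) * (n • b) =
        (m - m * n) • a + (n - m * n) • b + (m * n) • (b * a)) ∧
    (∀ m n : ℤ, (m • a) * (n • b) = (n • b) * (m • a)) := by
  have hab : a * b = b * a := by simpa using ha 1
  have ha' : ∀ m : ℤ, a * (m • b) = (m • b) * a := ha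
  refine ⟨brace_formula B hbrace a b hb, fun m n => ?_⟩
  rw [brace_formula B hbrace a b hb m n,
    brace_formula B hbrace b a ha' n m, hab, mul_comm n m]
  abel
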